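/- arXiv:2109.00241 — 2 statements merged into one kernel-verified Lean document; each statement's English description precedes it below -/
import Mathlib

section
/- The family (K_{1,0}(w)), indexed by all nonempty words w over the alphabet {2,3}, is linearly independent over ℚ in A; that is, the zinbiel subalgebra of A generated by δ_{(1,0)} and δ_{(1,0,0)} is free on these two generators. -/
/-- Words over the alphabet `{0,1}`, encoded with `false` = `0` and `true` = `1`. -/
abbrev Word : Type := List Bool

/-- The ℚ-vector space `A` of finitely supported functions on words over `{0,1}`. -/
abbrev A01 : Type := Word →₀ ℚ

/-- The basis element `δ_x` of `A` attached to a word `x`. -/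
noncomputable def δ (x : Word) : A01 := Finsupp.single x 1

/-- Prepend the letter `a` to every word of a formal sum. -/
noncomputable def prependLetter (a : Bool) (f : A01) : A01 :=
  Finsupp.mapDomain (List.cons a) f

/-- The shuffle product of two words, as an element of `A`. -/
noncomputable def shuffle : Word → Word → A01
  | [], y => δ y
  | a :: x, [] => δ (a :: x)
  | a :: x, b :: y =>
      prependLetter a (shuffle x (b :: y)) + prependLetter b (shuffle (a :: x) y)
  termination_by x y => x.length + y.length

/-- The half-shuffle product on basis words: `δ_{a::x} ≺ δ_y = a·(x ш y)`, `δ_[] ≺ δ_y = 0`. -/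
noncomputable def halfWord : Word → Word → A01
  | [], _ => 0
  | a :: x, y => prependLetter a (shuffle x y)

/-- The half-shuffle (zinbiel) product `≺` on `A`, extended bilinearly from basis words. -/
noncomputable def half (f g : A01) : A01 :=
  f.sum fun x c => g.sum fun y d => (c * d) • halfWord x y

/-- The right-parenthesized product `K(a_1, …, a_n) = a_1 ≺ (a_2 ≺ (⋯ ≺ a_n))`,
with `K(a_n) = a_n`, and `δ_[]` (the shuffle unit) for the empty list. -/
noncomputable def Klist : List A01 → A01
  | [] => δ []
  | [a] => a
  | a :: b :: l => half a (Klist (b :: l))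

/-- The generators `z_2 = δ_{(1,0)}` and `z_3 = u·δ_{(1,0,0)} + v·δ_{(1,1,0)}`;
letters of the alphabet `{2,3}` are encoded with `false` = `2` and `true` = `3`. -/
noncomputable def zgen (u v : ℚ) : Bool → A01
  | false => δ [true, false]
  | true => u • δ [true, false, false] + v • δ [true, true, false]

/-- `K_{u,v}(w)` for a word `w` over `{2,3}` (encoded with `false` = `2`, `true` = `3`). -/
noncomputable def Kuv (u v : ℚ) (w : List Bool) : A01 :=
  Klist (w.map (zgen u v))

/-- The block substitution `2 ↦ (1,0)`, `3 ↦ (1,0,0)`. -/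
def blocks0 (c : Bool) : Word := if c then [true, false, false] else [true, false]

/-- The block substitution `2 ↦ (1,0)`, `3 ↦ (1,1,0)`. -/
def blocks1 (c : Bool) : Word := if c then [true, true, false] else [true, false]

/-- `cat₀(w)`: substitute `2 ↦ (1,0)`, `3 ↦ (1,0,0)` and concatenate. -/
def cat0 (w : List Bool) : Word := (w.map blocks0).flatten

/-- `cat₁(w)`: substitute `2 ↦ (1,0)`, `3 ↦ (1,1,0)` and concatenate. -/
def cat1 (w : List Bool) : Word := (w.map blocks1).flatten

/-- A good-shuffle realizing the word `x` from the words `ws = (w^1, …, w^n)`: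
a partition `S` of the positions of `x`, reading `x` along `S j` gives `w^j`,
and the minima of the parts are in increasing order. -/
def GoodShuffle (ws : List Word) (x : Word)
    (S : Fin ws.length → Finset (Fin x.length)) : Prop :=
  (∀ p : Fin x.length, ∃! j, p ∈ S j) ∧
  (∀ j, ((S j).sort (· ≤ ·)).map x.get = ws.get j) ∧
  (∀ j k, j < k → (S j).min < (S k).min)

/-- The weight of a word over `{2,3}`: the sum of its letters. -/
def wt (w : List Bool) : ℕ := (w.map fun c => if c then 3 else 2).sum

/-! ### Auxiliary lemmas -/

section Aux

open List

lemma prepend_apply_cons (a : Bool) (f : A01) (z : Word) :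
    prependLetter a f (a :: z) = f z :=
  Finsupp.mapDomain_apply List.cons_injective f z

lemma prepend_ne_zero {a : Bool} {f : A01} {x : Word}
    (h : prependLetter a f x ≠ 0) : ∃ t, x = a :: t ∧ f t ≠ 0 := by
  match x with
  | [] =>
      exfalso; apply h
      apply Finsupp.mapDomain_notin_range
      rintro ⟨w, hw⟩; simp at hw
  | b :: t =>
      by_cases hb : b = a
      · subst hb
        exact ⟨t, rfl, by rwa [prepend_apply_cons] at h⟩
      · exfalso; apply h
        apply Finsupp.mapDomain_notin_range
        rintro ⟨w, hw⟩
        exact hb (by injection hw with h1 _; exact h1.symm)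

lemma delta_apply (x y : Word) : δ x y = if x = y then 1 else 0 := by
  simp [δ, Finsupp.single_apply]

/-- Length of support elements of a shuffle. -/
lemma shuffle_len : ∀ (x y z : Word), shuffle x y z ≠ 0 →
    z.length = x.length + y.length := by
  intro x y
  induction x, y using shuffle.induct with
  | case1 y =>
      intro z hz
      rw [shuffle, delta_apply] at hz
      split at hz
      · simp_all
      · simp at hz
  | case2 a x =>
      intro z hz
      rw [shuffle, delta_apply] at hz
      split at hz
      · simp_all
      · simp at hz
  | case3 a x b y ih1 ih2 =>
      intro z hz
      rw [shuffle] at hz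
      rw [Finsupp.add_apply] at hz
      rcases (by by_contra hc; push_neg at hc; simp [hc.1, hc.2] at hz :
        prependLetter a (shuffle x (b :: y)) z ≠ 0 ∨
        prependLetter b (shuffle (a :: x) y) z ≠ 0) with h | h
      · obtain ⟨t, rfl, ht⟩ := prepend_ne_zero h
        have := ih1 t ht
        simp only [List.length_cons] at *
        omega
      · obtain ⟨t, rfl, ht⟩ := prepend_ne_zero h
        have := ih2 t ht
        simp only [List.length_cons] at *
        omega

/-- Lex-or-equal on words, `false < true`. -/
def LeL (x y : Word) : Prop := x = y ∨ List.Lex (· < ·) x y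

lemma LeL.refl (x : Word) : LeL x x := Or.inl rfl

lemma LeL_cons {x y : Word} (a : Bool) (h : LeL x y) : LeL (a :: x) (a :: y) := by
  rcases h with rfl | h
  · exact Or.inl rfl
  · exact Or.inr (List.Lex.cons h)

lemma LeL_cons_inv {x y : Word} {a : Bool} (h : LeL (a :: x) (a :: y)) : LeL x y := by
  rcases h with h | h
  · exact Or.inl (by injection h)
  · cases h with
    | cons h => exact Or.inr h
    | rel h => exact absurd h (lt_irrefl a)

lemma LeL_trans {x y z : Word} (h1 : LeL x y) (h2 : LeL y z) : LeL x z := by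
  rcases h1 with rfl | h1
  · exact h2
  rcases h2 with rfl | h2
  · exact Or.inr h1
  · exact Or.inr (List.lex_trans lt_trans h1 h2)

lemma LeL_antisymm {x y : Word} (h1 : LeL x y) (h2 : LeL y x) : x = y := by
  rcases h1 with rfl | h1
  · rfl
  rcases h2 with rfl | h2
  · rfl
  · exact absurd h2 (asymm h1)

lemma LeL_total : ∀ x y : Word, LeL x y ∨ LeL y x := by
  intro x
  induction x with
  | nil =>
      intro y
      cases y with
      | nil => exact Or.inl (Or.inl rfl)
      | cons b y => exact Or.inl (Or.inr List.Lex.nil)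
  | cons a x ih =>
      intro y
      cases y with
      | nil => exact Or.inr (Or.inr List.Lex.nil)
      | cons b y =>
          cases a <;> cases b
          · rcases ih y with h | h
            · exact Or.inl (LeL_cons false h)
            · exact Or.inr (LeL_cons false h)
          · exact Or.inl (Or.inr (List.Lex.rel (by decide)))
          · exact Or.inr (Or.inr (List.Lex.rel (by decide)))
          · rcases ih y with h | h
            · exact Or.inl (LeL_cons true h)
            · exact Or.inr (LeL_cons true h)

lemma LeL_append_left : ∀ (t x y : Word), LeL (t ++ x) (t ++ y) ↔ LeL x y := by
  intro t
  induction t with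
  | nil => simp
  | cons a t ih =>
      intro x y
      constructor
      · intro h; exact (ih x y).mp (LeL_cons_inv h)
      · intro h; exact LeL_cons a ((ih x y).mpr h)

lemma rep_append_cons (m : ℕ) (y : Word) :
    List.replicate m false ++ (false :: y) = false :: (List.replicate m false ++ y) := by
  induction m with
  | zero => rfl
  | succ m ih => simp [List.replicate_succ, ih]

/-- Any word in the support of `0^k ш y` is lex-≥ `0^k ++ y`. -/
lemma shuffle_rep_ge : ∀ (n k : ℕ) (y z : Word), k + y.length ≤ n →
    shuffle (List.replicate k false) y z ≠ 0 →
    LeL (List.replicate k false ++ y) z := by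
  intro n
  induction n with
  | zero =>
      intro k y z hn hz
      have hk : k = 0 := by omega
      subst hk
      rw [List.replicate_zero, List.nil_append] at *
      rw [shuffle, delta_apply] at hz
      split at hz
      · exact Or.inl (by assumption)
      · simp at hz
  | succ n ih =>
      intro k y z hn hz
      match k, y with
      | 0, y =>
          rw [List.replicate_zero, List.nil_append] at *
          rw [shuffle, delta_apply] at hz
          split at hz
          · exact Or.inl (by assumption)
          · simp at hz
      | (k+1), [] =>
          rw [List.replicate_succ, shuffle, delta_apply] at hz
          split at hz
          · rename_i hh
            rw [List.append_nil, List.replicate_succ]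
            exact Or.inl hh
          · simp at hz
      | (k+1), (b :: y') =>
          rw [List.replicate_succ, shuffle, Finsupp.add_apply] at hz
          rcases (by by_contra hc; push_neg at hc; simp [hc.1, hc.2] at hz :
            prependLetter false (shuffle (List.replicate k false) (b :: y')) z ≠ 0 ∨
            prependLetter b (shuffle (false :: List.replicate k false) y') z ≠ 0) with h | h
          · obtain ⟨t, rfl, ht⟩ := prepend_ne_zero h
            have := ih k (b :: y') t (by simpa using Nat.le_of_succ_le_succ (by simpa [Nat.succ_add] using hn)) ht
            rw [List.replicate_succ, List.cons_append]
            exact LeL_cons false this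
          · obtain ⟨t, rfl, ht⟩ := prepend_ne_zero h
            cases b with
            | true =>
                rw [List.replicate_succ, List.cons_append]
                exact Or.inr (List.Lex.rel (by decide))
            | false =>
                have := ih (k+1) y' t (by simp at hn ⊢; omega)
                  (by rw [List.replicate_succ]; exact ht)
                rw [rep_append_cons]
                exact LeL_cons false this

/-- Coefficient of the minimal word `0^k ++ y` in `0^k ш y`, for `y` starting with `1`. -/
lemma shuffle_rep_coeff : ∀ (k : ℕ) (y' : Word),
    shuffle (List.replicate k false) (true :: y')
      (List.replicate k false ++ (true :: y')) = 1 := by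
  intro k
  induction k with
  | zero =>
      intro y'
      rw [List.replicate_zero, List.nil_append, shuffle, delta_apply, if_pos rfl]
  | succ k ih =>
      intro y'
      rw [List.replicate_succ, shuffle, Finsupp.add_apply, List.cons_append,
        prepend_apply_cons]
      have h2 : prependLetter true (shuffle (false :: List.replicate k false) y')
          (false :: (List.replicate k false ++ true :: y')) = 0 := by
        by_contra h
        obtain ⟨t, ht, _⟩ := prepend_ne_zero h
        simp at ht
      rw [h2, ih, add_zero]

end Aux

section Main

/-- Tail of the block `blocks0 c`: `k` zeros with `k = 1` or `2`. -/
def blen (c : Bool) : ℕ := if c then 2 else 1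

lemma zgen_eq (c : Bool) : zgen 1 0 c = δ (true :: List.replicate (blen c) false) := by
  cases c <;> simp [zgen, blen, List.replicate]

lemma half_delta (a : Bool) (x : Word) (g : A01) :
    half (δ (a :: x)) g = g.sum fun y d => d • prependLetter a (shuffle x y) := by
  unfold half δ
  rw [Finsupp.sum_single_index]
  · simp [halfWord]
  · simp

lemma Kuv_cons (c : Bool) (w : List Bool) (hw : w ≠ []) :
    Kuv 1 0 (c :: w) =
      (Kuv 1 0 w).sum fun y d =>
        d • prependLetter true (shuffle (List.replicate (blen c) false) y) := by
  obtain ⟨c', w', rfl⟩ : ∃ c' w', w = c' :: w' := by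
    cases w with
    | nil => exact absurd rfl hw
    | cons c' w' => exact ⟨c', w', rfl⟩
  show Klist (zgen 1 0 c :: zgen 1 0 c' :: w'.map (zgen 1 0)) = _
  rw [show Klist (zgen 1 0 c :: zgen 1 0 c' :: w'.map (zgen 1 0)) =
      half (zgen 1 0 c) (Klist (zgen 1 0 c' :: w'.map (zgen 1 0))) from rfl,
    zgen_eq, half_delta]
  rfl

lemma cat0_cons (c : Bool) (w : List Bool) :
    cat0 (c :: w) = true :: (List.replicate (blen c) false ++ cat0 w) := by
  cases c <;> simp [cat0, blen, blocks0, List.replicate]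

lemma cat0_head (w : List Bool) (hw : w ≠ []) : ∃ t, cat0 w = true :: t := by
  obtain ⟨c, w', rfl⟩ : ∃ c w', w = c :: w' := by
    cases w with
    | nil => exact absurd rfl hw
    | cons c w' => exact ⟨c, w', rfl⟩
  exact ⟨_, cat0_cons c w'⟩

lemma cat0_not_false (w : List Bool) (t : Word) : cat0 w ≠ false :: t := by
  cases w with
  | nil => simp [cat0]
  | cons c w' => rw [cat0_cons]; simp

lemma cat0_injective : ∀ w w' : List Bool, cat0 w = cat0 w' → w = w' := by
  intro w
  induction w with
  | nil =>
      intro w' h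
      cases w' with
      | nil => rfl
      | cons c w'' =>
          rw [cat0_cons] at h
          simp [cat0] at h
  | cons c w ih =>
      intro w' h
      cases w' with
      | nil =>
          rw [cat0_cons] at h
          simp [cat0] at h
      | cons c' w'' =>
          rw [cat0_cons, cat0_cons] at h
          have h2 : List.replicate (blen c) false ++ cat0 w
              = List.replicate (blen c') false ++ cat0 w'' := by injection h
          by_cases hcc : c = c'
          · subst hcc
            have := List.append_cancel_left h2
            rw [ih _ this]
          · exfalso
            cases c <;> cases c'
            · exact hcc rfl
            · have : cat0 w = false :: cat0 w'' := by
                simpa [blen, List.replicate] using h2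
              exact cat0_not_false w _ this
            · have : cat0 w'' = false :: cat0 w := by
                simpa [blen, List.replicate] using h2.symm
              exact cat0_not_false w'' _ this
            · exact hcc rfl

/-- Main induction: `cat0 w` is the lex-least element of the support of
`Kuv 1 0 w`, with coefficient `1`, all support elements have full length
and begin with `true`. -/
theorem Kuv_main : ∀ w : List Bool, w ≠ [] →
    Kuv 1 0 w (cat0 w) = 1 ∧
    ∀ x, Kuv 1 0 w x ≠ 0 →
      x.length = (cat0 w).length ∧ LeL (cat0 w) x ∧ ∃ t, x = true :: t := by
  intro w
  induction w with
  | nil => intro h; exact absurd rfl h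
  | cons c w ih =>
      intro _
      by_cases hw : w = []
      · subst hw
        have hK : Kuv 1 0 [c] = δ (true :: List.replicate (blen c) false) := by
          rw [show Kuv 1 0 [c] = zgen 1 0 c from rfl, zgen_eq]
        have hc : cat0 [c] = true :: (List.replicate (blen c) false) := by
          rw [cat0_cons]; simp [cat0]
        rw [hK, hc]
        constructor
        · rw [delta_apply, if_pos rfl]
        · intro x hx
          rw [delta_apply] at hx
          split at hx
          · rename_i hh
            subst hh
            exact ⟨rfl, LeL.refl _, _, rfl⟩
          · simp at hx
      · obtain ⟨h1, h2⟩ := ih hw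
        have hK := Kuv_cons c w hw
        have hcc : cat0 (c :: w) = true :: (List.replicate (blen c) false ++ cat0 w) :=
          cat0_cons c w
        obtain ⟨Ct, hCt⟩ := cat0_head w hw
        constructor
        · -- coefficient 1
          rw [hK, hcc, Finsupp.sum_apply]
          rw [Finsupp.sum]
          rw [Finset.sum_eq_single (cat0 w)]
          · rw [Finsupp.smul_apply, prepend_apply_cons, smul_eq_mul, h1, one_mul,
              hCt, shuffle_rep_coeff]
          · intro y hy hyC
            rw [Finsupp.smul_apply, prepend_apply_cons, smul_eq_mul]
            have hgy : Kuv 1 0 w y ≠ 0 := Finsupp.mem_support_iff.mp hy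
            have hsz : shuffle (List.replicate (blen c) false) y
                (List.replicate (blen c) false ++ cat0 w) = 0 := by
              by_contra hs
              have hge := shuffle_rep_ge (blen c + y.length) (blen c) y
                (List.replicate (blen c) false ++ cat0 w) le_rfl hs
              have : LeL y (cat0 w) := (LeL_append_left _ y (cat0 w)).mp hge
              exact hyC (LeL_antisymm this ((h2 y hgy).2.1))
            rw [hsz, mul_zero]
          · intro hCs
            rw [Finsupp.notMem_support_iff.mp hCs]
            simp
        · -- support bound
          intro x hx
          rw [hK, Finsupp.sum_apply, Finsupp.sum] at hx
          obtain ⟨y, hy, hne⟩ := Finset.exists_ne_zero_of_sum_ne_zero hx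
          rw [Finsupp.smul_apply, smul_eq_mul] at hne
          have hgy : Kuv 1 0 w y ≠ 0 := Finsupp.mem_support_iff.mp hy
          have hp : prependLetter true (shuffle (List.replicate (blen c) false) y) x ≠ 0 :=
            fun h => hne (by rw [h, mul_zero])
          obtain ⟨t, rfl, hst⟩ := prepend_ne_zero hp
          obtain ⟨hlen, hLeL, _⟩ := h2 y hgy
          have hlt : t.length = (List.replicate (blen c) false).length + y.length :=
            shuffle_len _ y t hst
          have hge := shuffle_rep_ge (blen c + y.length) (blen c) y t le_rfl hst
          refine ⟨?_, ?_, t, rfl⟩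
          · rw [hcc]
            simp only [List.length_cons, List.length_append] at *
            omega
          · rw [hcc]
            refine LeL_cons true (LeL_trans ?_ hge)
            exact (LeL_append_left _ (cat0 w) y).mpr hLeL

end Main

section Final

lemma exists_LeL_min : ∀ s : Finset Word, s.Nonempty → ∃ m ∈ s, ∀ x ∈ s, LeL m x := by
  intro s
  induction s using Finset.induction_on with
  | empty => intro h; exact absurd h (by simp)
  | @insert a s' ha ih =>
      intro _
      rcases s'.eq_empty_or_nonempty with rfl | hne
      · exact ⟨a, by simp, by simp [LeL.refl]⟩
      · obtain ⟨m, hm, hmin⟩ := ih hne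
        rcases LeL_total a m with h | h
        · refine ⟨a, Finset.mem_insert_self a s', ?_⟩
          intro x hx
          rcases Finset.mem_insert.mp hx with rfl | hx
          · exact LeL.refl x
          · exact LeL_trans h (hmin x hx)
        · refine ⟨m, Finset.mem_insert_of_mem hm, ?_⟩
          intro x hx
          rcases Finset.mem_insert.mp hx with rfl | hx
          · exact h
          · exact hmin x hx

theorem K10_linearIndependent' :
    LinearIndependent ℚ (fun w : {l : List Bool // l ≠ []} => Kuv 1 0 w.1) := by
  rw [linearIndependent_iff]
  intro l hl
  by_contra hne
  have hs : l.support.Nonempty := Finsupp.support_nonempty_iff.mpr hne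
  -- minimal length of cat0 over the support
  set lens : Finset ℕ := l.support.image (fun w => (cat0 w.1).length) with hlens
  have hlensne : lens.Nonempty := hs.image _
  set n : ℕ := lens.min' hlensne with hn
  set s' : Finset {l : List Bool // l ≠ []} :=
    l.support.filter (fun w => (cat0 w.1).length = n) with hs'
  have hs'ne : s'.Nonempty := by
    obtain ⟨m, hm⟩ := Finset.mem_image.mp (lens.min'_mem hlensne)
    exact ⟨m, Finset.mem_filter.mpr ⟨hm.1, hm.2⟩⟩
  obtain ⟨p, hpmem, hpmin⟩ := exists_LeL_min (s'.image fun w => cat0 w.1) (hs'ne.image _)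
  obtain ⟨w0, hw0s', hw0p⟩ := Finset.mem_image.mp hpmem
  have hw0sup : w0 ∈ l.support := (Finset.mem_filter.mp hw0s').1
  have hw0len : (cat0 w0.1).length = n := (Finset.mem_filter.mp hw0s').2
  -- evaluate the relation at p = cat0 w0
  have hev : (Finsupp.linearCombination ℚ (fun w : {l : List Bool // l ≠ []} => Kuv 1 0 w.1) l)
      (cat0 w0.1) = 0 := by rw [hl]; rfl
  rw [Finsupp.linearCombination_apply, Finsupp.sum_apply, Finsupp.sum,
    Finset.sum_eq_single w0] at hev
  · rw [Finsupp.smul_apply, (Kuv_main w0.1 w0.2).1, smul_eq_mul, mul_one] at hev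
    exact Finsupp.mem_support_iff.mp hw0sup hev
  · intro w hwsup hwne
    rw [Finsupp.smul_apply, smul_eq_mul]
    suffices h : Kuv 1 0 w.1 (cat0 w0.1) = 0 by rw [h, mul_zero]
    by_contra hKne
    obtain ⟨hlen, hLeL, _⟩ := (Kuv_main w.1 w.2).2 _ hKne
    -- w also has minimal cat0-length
    have hnle : n ≤ (cat0 w.1).length :=
      Finset.min'_le _ _ (Finset.mem_image_of_mem _ hwsup)
    have hweq : (cat0 w.1).length = n := by omega
    have hws' : w ∈ s' := Finset.mem_filter.mpr ⟨hwsup, hweq⟩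
    have : LeL (cat0 w0.1) (cat0 w.1) := by
      rw [hw0p]
      exact hpmin _ (Finset.mem_image_of_mem _ hws')
    have hceq : cat0 w.1 = cat0 w0.1 := LeL_antisymm hLeL this
    exact hwne (Subtype.ext (cat0_injective _ _ hceq))
  · intro h
    rw [Finsupp.notMem_support_iff.mp h, zero_smul]
    rfl

end Final


/-- The family `K_{1,0}(w)`, indexed by nonempty words `w` over `{2,3}`
(encoded with `false` = `2`, `true` = `3`), is linearly independent over `ℚ` in `A`:
the zinbiel subalgebra generated by `δ_{(1,0)}` and `δ_{(1,0,0)}` is free on these generators. -/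
theorem K10_linearIndependent :
    LinearIndependent ℚ (fun w : {l : List Bool // l ≠ []} => Kuv 1 0 w.1) := by
  exact K10_linearIndependent'
end

section
/- Let w be a word over {2,3} with k letters equal to 2 and ℓ letters equal to 3. Then the component of K_{u,v}(w) supported on words over {0,1} containing exactly k + 2ℓ letters 1 (the maximal possible number of 1's) equals v^ℓ · K_{0,1}(w). In particular, if v ≠ 0 this leading term is a nonzero multiple of K_{0,1}(w). -/
theorem ccT (a : Bool) (l : List Bool) :
    (a :: l).count true = l.count true + (if a then 1 else 0) := by
  cases a <;> simp [List.count_cons]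

theorem count_shuffle : ∀ x y : Word, ∀ z ∈ (shuffle x y).support,
    z.count true = x.count true + y.count true := by
  intro x y
  induction x, y using shuffle.induct with
  | case1 y =>
    intro z hz
    simp [shuffle, δ, Finsupp.support_single_ne_zero] at hz
    simp [hz]
  | case2 a x =>
    intro z hz
    simp [shuffle, δ, Finsupp.support_single_ne_zero] at hz
    simp [hz]
  | case3 a x b y ih1 ih2 =>
    intro z hz
    rw [shuffle] at hz
    rcases Finset.mem_union.1 (Finsupp.support_add hz) with h | h
    · rcases Finset.mem_image.1 (Finsupp.mapDomain_support h) with ⟨z', hz', rfl⟩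
      have H := ih1 z' hz'
      clear hz h hz'
      rw [ccT, ccT, ccT] at *
      omega
    · rcases Finset.mem_image.1 (Finsupp.mapDomain_support h) with ⟨z', hz', rfl⟩
      have H := ih2 z' hz'
      clear hz h hz'
      rw [ccT, ccT, ccT] at *
      omega

theorem count_halfWord : ∀ x y : Word, ∀ z ∈ (halfWord x y).support,
    z.count true = x.count true + y.count true := by
  intro x y z hz
  cases x with
  | nil => simp [halfWord] at hz
  | cons a x' =>
    rw [halfWord] at hz
    rcases Finset.mem_image.1 (Finsupp.mapDomain_support hz) with ⟨z', hz', rfl⟩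
    have H := count_shuffle x' y z' hz'
    rw [ccT, ccT]
    omega

theorem filter_eq_self' {p : Word → Prop} [DecidablePred p] {f : A01}
    (h : ∀ z ∈ f.support, p z) : f.filter p = f := by
  ext a
  rw [Finsupp.filter_apply]
  split_ifs with hp
  · rfl
  · by_contra hne
    exact hp (h a (Finsupp.mem_support_iff.2 fun h0 => hne h0.symm))

theorem filter_eq_zero' {p : Word → Prop} [DecidablePred p] {f : A01}
    (h : ∀ z ∈ f.support, ¬ p z) : f.filter p = 0 := by
  ext a
  rw [Finsupp.filter_apply]
  split_ifs with hp
  · by_contra hne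
    exact h a (Finsupp.mem_support_iff.2 fun h0 => hne (h0 ▸ rfl)) hp
  · rfl

theorem half_single_left (x : Word) (F : A01) :
    half (δ x) F = F.sum fun y d => d • halfWord x y := by
  rw [half, δ, Finsupp.sum_single_index] <;> simp

theorem filter_half_single (x : Word) (F : A01) (m : ℕ) :
    (half (δ x) F).filter (fun z => z.count true = x.count true + m)
      = half (δ x) (F.filter fun z => z.count true = m) := by
  rw [half_single_left, half_single_left, Finsupp.sum, Finsupp.filter_sum,
    Finsupp.sum, Finsupp.support_filter, Finset.sum_filter]
  apply Finset.sum_congr rfl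
  intro y _
  by_cases hq : y.count true = m
  · rw [if_pos hq, Finsupp.filter_apply, if_pos hq]
    apply filter_eq_self'
    intro z hz
    have := count_halfWord x y z (Finsupp.support_smul hz)
    omega
  · rw [if_neg hq]
    apply filter_eq_zero'
    intro z hz
    have := count_halfWord x y z (Finsupp.support_smul hz)
    omega

theorem half_support {f g : A01} {z : Word} (hz : z ∈ (half f g).support) :
    ∃ x ∈ f.support, ∃ y ∈ g.support, z.count true = x.count true + y.count true := by
  rw [half] at hz
  have h1 := Finsupp.support_sum hz
  rcases Finset.mem_biUnion.1 h1 with ⟨x, hx, hz2⟩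
  have h2 := Finsupp.support_sum hz2
  rcases Finset.mem_biUnion.1 h2 with ⟨y, hy, hz3⟩
  exact ⟨x, hx, y, hy, count_halfWord x y z (Finsupp.support_smul hz3)⟩

theorem half_add_left (f1 f2 g : A01) : half (f1 + f2) g = half f1 g + half f2 g := by
  rw [half, half, half, Finsupp.sum_add_index'] <;> intros <;>
    simp [add_mul, add_smul, Finsupp.sum_add]

theorem half_smul_left (c : ℚ) (f g : A01) : half (c • f) g = c • half f g := by
  rw [half, half, Finsupp.sum_smul_index', Finsupp.smul_sum]
  · apply Finsupp.sum_congr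
    intro x _
    rw [Finsupp.smul_sum]
    apply Finsupp.sum_congr
    intro y _
    rw [smul_eq_mul, mul_assoc, mul_smul]
  · intro x; simp

theorem half_smul_right (c : ℚ) (f g : A01) : half f (c • g) = c • half f g := by
  rw [half, half, Finsupp.smul_sum]
  apply Finsupp.sum_congr
  intro x _
  rw [Finsupp.sum_smul_index', Finsupp.smul_sum]
  · apply Finsupp.sum_congr
    intro y _
    simp [smul_smul, mul_comm, mul_left_comm]
  · intro y; simp

theorem halfWord_nil (a : Bool) (x : Word) : halfWord (a :: x) [] = δ (a :: x) := by
  rw [halfWord]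
  cases x <;> rw [shuffle] <;> simp [prependLetter, δ, Finsupp.mapDomain_single]

theorem half_delta_nil (a : Bool) (x : Word) : half (δ (a :: x)) (δ []) = δ (a :: x) := by
  rw [half_single_left, δ, Finsupp.sum_single_index] <;> simp [halfWord_nil, δ]

theorem Kuv_cons_s11 (u v : ℚ) (c : Bool) (rest : List Bool) :
    Kuv u v (c :: rest) = half (zgen u v c) (Kuv u v rest) := by
  cases rest with
  | cons d r => rfl
  | nil =>
    show Klist [zgen u v c] = half (zgen u v c) (δ [])
    cases c with
    | false => rw [Klist]; exact (half_delta_nil true [false]).symm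
    | true =>
      rw [Klist]
      show _ = half (u • δ [true, false, false] + v • δ [true, true, false]) (δ [])
      rw [half_add_left, half_smul_left, half_smul_left, half_delta_nil, half_delta_nil]
      rfl

theorem zgen01_false : zgen 0 1 false = δ [true, false] := rfl
theorem zgen01_true : zgen 0 1 true = δ [true, true, false] := by
  rw [zgen]; simp

theorem count_K01 : ∀ w : List Bool, ∀ z ∈ (Kuv 0 1 w).support,
    z.count true = w.count false + 2 * w.count true := by
  intro w
  induction w with
  | nil =>
    intro z hz
    simp [Kuv, Klist, δ, Finsupp.support_single_ne_zero] at hz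
    simp [hz]
  | cons c rest ih =>
    intro z hz
    rw [Kuv_cons_s11] at hz
    rcases half_support hz with ⟨x, hx, y, hy, hc⟩
    have hy' := ih y hy
    cases c with
    | false =>
      rw [zgen01_false, δ, Finsupp.support_single_ne_zero _ one_ne_zero] at hx
      rcases Finset.mem_singleton.1 hx with rfl
      simp only [List.count_cons]
      simp only [List.count_cons] at hc
      simp at hc ⊢
      omega
    | true =>
      rw [zgen01_true, δ, Finsupp.support_single_ne_zero _ one_ne_zero] at hx
      rcases Finset.mem_singleton.1 hx with rfl
      simp only [List.count_cons] at hc ⊢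
      simp at hc ⊢
      omega

theorem count_Kuv_le (u v : ℚ) : ∀ w : List Bool, ∀ z ∈ (Kuv u v w).support,
    z.count true ≤ w.count false + 2 * w.count true := by
  intro w
  induction w with
  | nil =>
    intro z hz
    simp [Kuv, Klist, δ, Finsupp.support_single_ne_zero] at hz
    simp [hz]
  | cons c rest ih =>
    intro z hz
    rw [Kuv_cons_s11] at hz
    rcases half_support hz with ⟨x, hx, y, hy, hc⟩
    have hy' := ih y hy
    have hxc : x.count true ≤ if c then 2 else 1 := by
      cases c with
      | false =>
        rw [zgen, δ] at hx
        rcases Finset.mem_singleton.1 (Finsupp.support_single_subset hx) with rfl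
        simp
      | true =>
        rw [zgen] at hx
        rcases Finset.mem_union.1 (Finsupp.support_add hx) with h | h <;>
          have h2 := Finsupp.support_smul h
        · rcases Finset.mem_singleton.1 (Finsupp.support_single_subset h2) with rfl; simp
        · rcases Finset.mem_singleton.1 (Finsupp.support_single_subset h2) with rfl; simp
    cases c <;> simp only [List.count_cons] at hc ⊢ <;> simp at hxc hc ⊢ <;> omega

theorem filter_congr'' {p q : Word → Prop} [DecidablePred p] [DecidablePred q]
    (h : ∀ x, p x ↔ q x) (f : A01) : f.filter p = f.filter q := by
  ext a
  rw [Finsupp.filter_apply, Finsupp.filter_apply]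
  simp [h a]

theorem Kuv_main_s11 (u v : ℚ) : ∀ w : List Bool,
    Finsupp.filter (fun x : Word => x.count true = w.count false + 2 * w.count true)
        (Kuv u v w)
      = v ^ (w.count true) • Kuv 0 1 w := by
  intro w
  induction w with
  | nil =>
    simp only [List.count_nil, pow_zero, one_smul, Nat.mul_zero, Nat.add_zero]
    show Finsupp.filter _ (δ []) = δ []
    apply filter_eq_self'
    intro z hz
    simp [δ, Finsupp.support_single_ne_zero] at hz
    simp [hz]
  | cons c rest ih =>
    rw [Kuv_cons_s11, Kuv_cons_s11]
    cases c with
    | false =>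
      show Finsupp.filter _ (half (δ [true, false]) (Kuv u v rest)) = _
      rw [filter_congr'' (q := fun x : Word => x.count true
            = ([true, false] : Word).count true + (rest.count false + 2 * rest.count true))
          (fun z => by simp [List.count_cons]; omega) _, filter_half_single, ih, half_smul_right, zgen01_false]
      congr 1
    | true =>
      show Finsupp.filter _
          (half (u • δ [true, false, false] + v • δ [true, true, false]) (Kuv u v rest)) = _
      rw [filter_congr'' (q := fun x : Word => x.count true
            = ([true, true, false] : Word).count true
                + (rest.count false + 2 * rest.count true))
          (fun z => by simp [List.count_cons]; omega) _, half_add_left, half_smul_left, half_smul_left, Finsupp.filter_add,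
        Finsupp.filter_smul, Finsupp.filter_smul]
      have h1 : Finsupp.filter
          (fun x : Word => x.count true
            = ([true, true, false] : Word).count true
                + (rest.count false + 2 * rest.count true))
          (half (δ [true, false, false]) (Kuv u v rest)) = 0 := by
        apply filter_eq_zero'
        intro z hz
        rcases half_support hz with ⟨x, hx, y, hy, hc⟩
        rw [δ, Finsupp.support_single_ne_zero _ one_ne_zero] at hx
        rcases Finset.mem_singleton.1 hx with rfl
        have := count_Kuv_le u v rest y hy
        simp only [List.count_cons] at hc ⊢
        simp at hc ⊢
        omega
      rw [h1, filter_half_single, ih, half_smul_right, zgen01_true, smul_zero, zero_add,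
        smul_smul, List.count_cons]
      congr 1
      simp [pow_succ, mul_comm]


/-- For a word `w` over `{2,3}` (with `k` letters `2` and `ℓ` letters `3`, encoded by
`false`/`true`), the component of `K_{u,v}(w)` supported on words with exactly `k + 2ℓ`
letters `1` equals `v^ℓ · K_{0,1}(w)`; if `v ≠ 0` this is a nonzero multiple of `K_{0,1}(w)`. -/
theorem Kuv_leading_term_ones (u v : ℚ) (w : List Bool) :
    Finsupp.filter
        (fun x : Word => x.count true = w.count false + 2 * w.count true)
        (Kuv u v w)
      = v ^ (w.count true) • Kuv 0 1 w ∧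
    (v ≠ 0 → v ^ (w.count true) ≠ 0) := by
  exact ⟨Kuv_main_s11 u v w, fun h => pow_ne_zero _ h⟩
end
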